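/- Let n > 3 be odd and let m be an integer with 1 < m < n, gcd(m, n) = 1 and gcd(m − 1, n) = 1. Then L_n(m) is a weak inverse property (WIP) loop — equivalently, m·(m·y − (m−1)·x) − (m−1)·y ≡ x (mod n) for all distinct residues x, y modulo n — if and only if m² − m + 1 ≡ 0 (mod n). -/
import Mathlib

/-- `Lₙ(m)` is a weak inverse property loop iff `m² - m + 1 ≡ 0 (mod n)`. -/
theorem stmt_7 (n m : ℕ) (hn : 3 < n) (hodd : Odd n) (hm1 : 1 < m) (hm2 : m < n)
    (hg1 : Nat.gcd m n = 1) (hg2 : Nat.gcd (m - 1) n = 1) :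
    (∀ x y : ZMod n, x ≠ y →
        (m : ZMod n) * ((m : ZMod n) * y - ((m : ZMod n) - 1) * x)
            - ((m : ZMod n) - 1) * y
          = x)
      ↔ (m : ZMod n) ^ 2 - (m : ZMod n) + 1 = 0 := by
  haveI : Fact (1 < n) := ⟨by omega⟩
  constructor
  · intro h
    have h01 : (0 : ZMod n) ≠ 1 := (zero_ne_one)
    have := h 0 1 h01
    linear_combination this
  · intro h x y hxy
    linear_combination (y - x) * h
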